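/- For every integer n ≥ 1, the polynomial (-1)^{n-1} q^{n(n-1)/2} - 1 is divisible by the n-th cyclotomic polynomial Φ_n(q) in ℤ[q]. Equivalently, (-1)^{n-1} q^{binom(n,2)} ≡ 1 (mod Φ_n(q)). -/
import Mathlib

open Polynomial

/-- For `n ≥ 1`, `(-1)^{n-1} q^{n(n-1)/2} - 1` is divisible by `Φ_n(q)` in `ℤ[q]`. -/
theorem stmt2 (n : ℕ) (hn : 1 ≤ n) :
    Polynomial.cyclotomic n ℤ ∣
      (Polynomial.C ((-1 : ℤ) ^ (n - 1)) * Polynomial.X ^ (n * (n - 1) / 2) - 1) := by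
  rcases Nat.even_or_odd n with he | ho
  · -- n even
    obtain ⟨k, hk⟩ := he
    have hk1 : 1 ≤ k := by omega
    have hd : k ∈ n.properDivisors := by
      rw [Nat.mem_properDivisors]
      exact ⟨⟨2, by omega⟩, by omega⟩
    -- Φ_n ∣ X^k + 1
    have h1 : (cyclotomic n ℤ) ∣ X ^ k + 1 := by
      have h2 := X_pow_sub_one_mul_cyclotomic_dvd_X_pow_sub_one_of_dvd ℤ hd
      obtain ⟨c, hc⟩ := h2
      have hfac : (X : ℤ[X]) ^ n - 1 = (X ^ k - 1) * (X ^ k + 1) := by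
        rw [hk]; ring
      rw [hfac, mul_assoc] at hc
      have hmonic : ((X : ℤ[X]) ^ k - 1).Monic := by
        simpa using monic_X_pow_sub_C (1 : ℤ) (by omega)
      have := mul_left_cancel₀ hmonic.ne_zero hc
      exact ⟨c, this⟩
    have hodd : Odd (n - 1) := Nat.odd_iff.mpr (by omega)
    have h3 : (cyclotomic n ℤ) ∣ (X : ℤ[X]) ^ (k * (n - 1)) + 1 := by
      have := Odd.add_dvd_pow_add_pow ((X : ℤ[X]) ^ k) 1 hodd
      simp only [one_pow, ← pow_mul] at this
      exact h1.trans this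
    have hm : n * (n - 1) / 2 = k * (n - 1) := by
      rw [show n * (n - 1) = 2 * (k * (n - 1)) by rw [hk]; ring]
      exact Nat.mul_div_cancel_left _ (by norm_num)
    have hneg : ((-1 : ℤ)) ^ (n - 1) = -1 := hodd.neg_one_pow
    rw [hm, hneg]
    have : (C (-1 : ℤ)) * X ^ (k * (n - 1)) - 1 = -((X : ℤ[X]) ^ (k * (n - 1)) + 1) := by
      simp; ring
    rw [this]
    exact h3.neg_right
  · -- n odd
    have heven : Even (n - 1) := Nat.Odd.sub_odd ho odd_one
    have hneg : ((-1 : ℤ)) ^ (n - 1) = 1 := heven.neg_one_pow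
    obtain ⟨k, hk⟩ := heven
    have hk2 : n - 1 = 2 * k := by omega
    have hm : n * (n - 1) / 2 = n * k := by
      rw [show n * (n - 1) = 2 * (n * k) by rw [hk2]; ring]
      exact Nat.mul_div_cancel_left _ (by norm_num)
    rw [hneg, hm, map_one, one_mul]
    have h1 : (cyclotomic n ℤ) ∣ (X : ℤ[X]) ^ n - 1 := cyclotomic.dvd_X_pow_sub_one n ℤ
    have h2 : ((X : ℤ[X]) ^ n - 1) ∣ (X ^ n) ^ k - 1 := by
      simpa using sub_dvd_pow_sub_pow ((X : ℤ[X]) ^ n) 1 k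
    rw [← pow_mul] at h2
    exact h1.trans h2
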